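/- Let $a \ge 0$, $b > 0$ be real numbers and $0 < \alpha < 1$. Then for all real numbers $c_1, c_2$ with $0 \le c_1 \le c_2 \le b$, the increase of the Tversky similarity dominates the increase of the Jaccard index: $\dfrac{c_2}{\alpha a + b + c_2} - \dfrac{c_1}{\alpha a + b + c_1} \;\ge\; \dfrac{c_2}{a + b + c_2} - \dfrac{c_1}{a + b + c_1}$. -/
import Mathlib


/-- Integrated form of the growth-rate theorem: as the ACN count grows from
`c₁` to `c₂` (with `0 ≤ c₁ ≤ c₂ ≤ b`), the Tversky similarity (parameters
`0 < α < 1`, `β = 1`) increases at least as much as the Jaccard index. -/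
theorem tversky_increase_ge_jaccard_increase
    (a b α : ℝ) (ha : 0 ≤ a) (hb : 0 < b) (hα0 : 0 < α) (hα1 : α < 1) :
    ∀ c₁ c₂ : ℝ, 0 ≤ c₁ → c₁ ≤ c₂ → c₂ ≤ b →
      c₂ / (α * a + b + c₂) - c₁ / (α * a + b + c₁) ≥
        c₂ / (a + b + c₂) - c₁ / (a + b + c₁) := by
  intro c₁ c₂ h1 h12 h2b
  have hαa : 0 ≤ α * a := mul_nonneg hα0.le ha
  have h2 : 0 ≤ c₂ := le_trans h1 h12
  have p1 : 0 < α * a + b + c₁ := by linarith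
  have p2 : 0 < α * a + b + c₂ := by linarith
  have q1 : 0 < a + b + c₁ := by linarith
  have q2 : 0 < a + b + c₂ := by linarith
  have e1 : c₂ / (α * a + b + c₂) - c₁ / (α * a + b + c₁)
      = (α * a + b) * (c₂ - c₁) / ((α * a + b + c₁) * (α * a + b + c₂)) := by
    field_simp; ring
  have e2 : c₂ / (a + b + c₂) - c₁ / (a + b + c₁)
      = (a + b) * (c₂ - c₁) / ((a + b + c₁) * (a + b + c₂)) := by
    field_simp; ring
  rw [e1, e2, ge_iff_le, div_le_div_iff₀ (by positivity) (by positivity)]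
  have hk : α * a + b ≤ a + b := by nlinarith
  have hcc : c₁ * c₂ ≤ (α * a + b) * (a + b) := by nlinarith
  nlinarith [mul_nonneg (mul_nonneg (sub_nonneg.mpr h12) (sub_nonneg.mpr hk))
      (sub_nonneg.mpr hcc)]
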